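/- Assume that r(0) = sin(π/8). Then there exists a constant c > 0 such that for every x > 0, | ψ(x) − √(2/π) · x^{1/2} | ≤ c x. -/

import Mathlib

open MeasureTheory Real

open Set Filter

/-- `L t = ∫_0^t (log s)/(1+s²) ds`. -/
noncomputable def Lfun (t : ℝ) : ℝ := ∫ s in (0 : ℝ)..t, Real.log s / (1 + s ^ 2)

/-- `r(x) = (√2/(2π)) ∫_0^∞ t (1+t²)^{-5/4} exp(L(t)/π) e^{-tx} dt`. -/
noncomputable def rFun (x : ℝ) : ℝ :=
  (Real.sqrt 2 / (2 * Real.pi)) * ∫ t in Set.Ioi (0 : ℝ),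
    t * (1 + t ^ 2) ^ (-(5 / 4 : ℝ)) * Real.exp (Lfun t / Real.pi) * Real.exp (-t * x)

/-- `ψ(x) = sin(x + π/8) - r(x)`. -/
noncomputable def psiFun (x : ℝ) : ℝ := Real.sin (x + Real.pi / 8) - rFun x

noncomputable def ff (s : ℝ) : ℝ := Real.log s / (1 + s ^ 2)

lemma ff_meas : Measurable ff := by
  apply Measurable.div Real.measurable_log
  fun_prop

lemma one_add_sq_pos (s : ℝ) : 0 < 1 + s ^ 2 := by positivity

-- log s ≤ (1/c) * s^c for s ≥ 1? we prove specific instances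
lemma log_le_rpow {s c : ℝ} (hs : 1 ≤ s) (hc : 0 < c) : Real.log s ≤ c⁻¹ * s ^ c := by
  have h0 : (0:ℝ) < s := lt_of_lt_of_le one_pos hs
  have h1 : Real.log (s ^ c) ≤ s ^ c - 1 := Real.log_le_sub_one_of_pos (rpow_pos_of_pos h0 c)
  rw [Real.log_rpow h0] at h1
  have h2 : c * Real.log s ≤ s ^ c := le_trans h1 (by linarith)
  calc Real.log s = c⁻¹ * (c * Real.log s) := by field_simp
    _ ≤ c⁻¹ * s ^ c := by
        apply mul_le_mul_of_nonneg_left h2 (by positivity)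

lemma abs_log_le_rpow_inv {s c : ℝ} (hs0 : 0 < s) (hs1 : s ≤ 1) (hc : 0 < c) :
    |Real.log s| ≤ c⁻¹ * s ^ (-c) := by
  have h1 : (1:ℝ) ≤ s⁻¹ := (one_le_inv₀ hs0).2 hs1
  have := log_le_rpow h1 hc
  rw [Real.log_inv, Real.inv_rpow hs0.le, ← Real.rpow_neg hs0.le] at this
  have hls : Real.log s ≤ 0 := Real.log_nonpos hs0.le hs1
  rw [abs_of_nonpos hls]
  linarith

lemma ff_abs_le_near (s : ℝ) (hs : 0 < s) : |ff s| ≤ 2 * s ^ (-(1/2 : ℝ)) := by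
  have hd := one_add_sq_pos s
  have habs : |ff s| = |Real.log s| / (1 + s ^ 2) := by
    rw [ff, abs_div, abs_of_pos hd]
  rcases le_or_gt s 1 with h1 | h1
  · have := abs_log_le_rpow_inv hs h1 (by norm_num : (0:ℝ) < 1/2)
    rw [habs]
    have h2 : |Real.log s| / (1 + s ^ 2) ≤ |Real.log s| := by
      apply div_le_self (abs_nonneg _) (by nlinarith)
    calc |Real.log s| / (1 + s^2) ≤ |Real.log s| := h2
      _ ≤ (1/2 : ℝ)⁻¹ * s ^ (-(1/2:ℝ)) := by
          convert this using 3 <;> norm_num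
      _ = 2 * s ^ (-(1/2:ℝ)) := by norm_num
  · have hl : Real.log s ≤ (1/2:ℝ)⁻¹ * s ^ (1/2:ℝ) := log_le_rpow h1.le (by norm_num)
    have hln : 0 ≤ Real.log s := Real.log_nonneg h1.le
    rw [habs, abs_of_nonneg hln]
    have hs2 : s ^ 2 ≤ 1 + s ^ 2 := by linarith
    have key : Real.log s / (1 + s ^ 2) ≤ 2 * s ^ (1/2:ℝ) / s ^ 2 := by
      apply div_le_div₀ (by positivity) (by norm_num at hl ⊢; linarith) (by positivity) hs2
    refine key.trans ?_
    have he : 2 * s ^ (1/2:ℝ) / s ^ 2 = 2 * s ^ (-(3/2):ℝ) := by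
      rw [div_eq_mul_inv, mul_assoc]
      congr 1
      rw [← Real.rpow_two, ← Real.rpow_neg (le_of_lt hs), ← Real.rpow_add hs]
      norm_num
    rw [he]
    have := Real.rpow_le_rpow_of_exponent_le h1.le (by norm_num : (-(3/2):ℝ) ≤ -(1/2))
    linarith

lemma ff_abs_le_far (s : ℝ) (hs : 1 ≤ s) : |ff s| ≤ 4 * s ^ (-(7/4 : ℝ)) := by
  have hs0 : (0:ℝ) < s := lt_of_lt_of_le one_pos hs
  have hd : (0:ℝ) < 1 + s ^ 2 := by positivity
  have hln : 0 ≤ Real.log s := Real.log_nonneg hs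
  have hl : Real.log s ≤ 4 * s ^ (1/4:ℝ) := by
    have := log_le_rpow hs (by norm_num : (0:ℝ) < 1/4)
    norm_num at this ⊢; linarith
  rw [ff, abs_div, abs_of_pos hd, abs_of_nonneg hln]
  have hs2 : s ^ 2 ≤ 1 + s ^ 2 := by linarith
  have key : Real.log s / (1 + s ^ 2) ≤ 4 * s ^ (1/4:ℝ) / s ^ 2 :=
    div_le_div₀ (by positivity) hl (by positivity) hs2
  refine key.trans (le_of_eq ?_)
  rw [div_eq_mul_inv, mul_assoc]
  congr 1
  rw [← Real.rpow_two, ← Real.rpow_neg hs0.le, ← Real.rpow_add hs0]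
  norm_num

-- integrable on Ioc 0 t
lemma ff_int_Ioc (t : ℝ) : IntegrableOn ff (Ioc 0 t) := by
  rcases le_or_gt t 0 with h | h
  · rw [Ioc_eq_empty (by exact not_lt.mpr h)]
    exact integrableOn_empty
  · have hmaj : IntegrableOn (fun s : ℝ => 2 * s ^ (-(1/2:ℝ))) (Ioc 0 t) := by
      have := (intervalIntegral.intervalIntegrable_rpow' (a := 0) (b := t) (by norm_num : (-1:ℝ) < -(1/2)))
      rw [intervalIntegrable_iff_integrableOn_Ioc_of_le h.le] at this
      exact this.const_mul 2
    refine hmaj.mono' (ff_meas.aestronglyMeasurable.restrict) ?_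
    filter_upwards [ae_restrict_mem measurableSet_Ioc] with s hsm
    rw [Real.norm_eq_abs]
    exact ff_abs_le_near s hsm.1

lemma ff_int_far : IntegrableOn ff (Ioi 1) := by
  have hmaj : IntegrableOn (fun s : ℝ => 4 * s ^ (-(7/4:ℝ))) (Ioi 1) :=
    (integrableOn_Ioi_rpow_of_lt (by norm_num) one_pos).const_mul 4
  refine hmaj.mono' (ff_meas.aestronglyMeasurable.restrict) ?_
  filter_upwards [ae_restrict_mem measurableSet_Ioi] with s hsm
  rw [Real.norm_eq_abs]
  exact ff_abs_le_far s hsm.out.le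

lemma ff_int : IntegrableOn ff (Ioi 0) := by
  have : (Ioi (0:ℝ)) = Ioc 0 1 ∪ Ioi 1 := (Ioc_union_Ioi_eq_Ioi one_pos.le).symm
  rw [this]
  exact (ff_int_Ioc 1).union ff_int_far

lemma ff_abs_int : IntegrableOn (fun s => |ff s|) (Ioi 0) := ff_int.abs

lemma abs_int_le {s : Set ℝ} (f : ℝ → ℝ) : |∫ x in s, f x| ≤ ∫ x in s, |f x| := by
  simpa [Real.norm_eq_abs] using
    norm_integral_le_integral_norm (μ := volume.restrict s) f

lemma Lfun_eq (t : ℝ) (ht : 0 ≤ t) : Lfun t = ∫ s in Ioc 0 t, ff s := by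
  rw [Lfun, intervalIntegral.integral_of_le ht]
  rfl

lemma Lfun_contOn : ContinuousOn Lfun (Ioi 0) := by
  intro t ht
  have hII : IntervalIntegrable ff volume 0 t := by
    rw [intervalIntegrable_iff_integrableOn_Ioc_of_le (le_of_lt ht)]
    exact ff_int_Ioc t
  have hca : ContinuousAt ff t := by
    apply ContinuousAt.div
    · exact Real.continuousAt_log (ne_of_gt ht)
    · fun_prop
    · positivity
  have := intervalIntegral.integral_hasDerivAt_right hII
    ff_meas.stronglyMeasurable.stronglyMeasurableAtFilter hca
  exact this.continuousAt.continuousWithinAt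

noncomputable def Bconst : ℝ := ∫ s in Ioi (0:ℝ), |ff s|

lemma Bconst_nonneg : 0 ≤ Bconst := integral_nonneg fun s => abs_nonneg _

lemma abs_Lfun_le (t : ℝ) (ht : 0 ≤ t) : |Lfun t| ≤ Bconst := by
  rw [Lfun_eq t ht]
  calc |∫ s in Ioc 0 t, ff s| ≤ ∫ s in Ioc 0 t, |ff s| := abs_int_le _
    _ ≤ ∫ s in Ioi 0, |ff s| := by
        apply setIntegral_mono_set ff_abs_int
        · filter_upwards with s using abs_nonneg _
        · exact HasSubset.Subset.eventuallyLE (Ioc_subset_Ioi_self)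

-- the substitution: ∫_{Ioi 0} ff = 0
lemma ff_integral_zero : ∫ s in Ioi (0:ℝ), ff s = 0 := by
  have h := integral_comp_rpow_Ioi ff (p := -1) (by norm_num)
  have heq : ∀ x ∈ Ioi (0:ℝ),
      (|(-1:ℝ)| * x ^ ((-1:ℝ) - 1)) • ff (x ^ (-1:ℝ)) = -ff x := by
    intro x hx
    have hx0 : (0:ℝ) < x := hx
    have h1 : x ^ ((-1:ℝ) - 1) = (x ^ 2)⁻¹ := by
      rw [show ((-1:ℝ) - 1) = -(2:ℕ) by norm_num, Real.rpow_neg hx0.le, Real.rpow_natCast]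
    have h2 : x ^ (-1:ℝ) = x⁻¹ := by
      rw [Real.rpow_neg hx0.le, Real.rpow_one]
    rw [h1, h2, ff, ff, Real.log_inv]
    have hx2 : (0:ℝ) < x ^ 2 := by positivity
    rw [smul_eq_mul]
    field_simp
    ring
  rw [setIntegral_congr_fun measurableSet_Ioi heq] at h
  rw [integral_neg] at h
  linarith

-- tail bound
lemma Lfun_tail (t : ℝ) (ht : 1 ≤ t) : |Lfun t| ≤ 6 * t ^ (-(3/4 : ℝ)) := by
  have ht0 : (0:ℝ) < t := lt_of_lt_of_le one_pos ht
  have hsplit : (Ioi (0:ℝ)) = Ioc 0 t ∪ Ioi t := (Ioc_union_Ioi_eq_Ioi ht0.le).symm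
  have hdisj : Disjoint (Ioc (0:ℝ) t) (Ioi t) := Ioc_disjoint_Ioi le_rfl
  have hint_t : IntegrableOn ff (Ioi t) := ff_int_far.mono (Ioi_subset_Ioi ht) le_rfl
  have hsum : (∫ s in Ioi (0:ℝ), ff s) = (∫ s in Ioc 0 t, ff s) + ∫ s in Ioi t, ff s := by
    rw [hsplit]
    exact setIntegral_union hdisj measurableSet_Ioi (ff_int_Ioc t) hint_t
  rw [ff_integral_zero] at hsum
  have hL : Lfun t = -∫ s in Ioi t, ff s := by
    rw [Lfun_eq t ht0.le]; linarith
  have hmaj : IntegrableOn (fun s : ℝ => 4 * s ^ (-(7/4:ℝ))) (Ioi t) :=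
    (integrableOn_Ioi_rpow_of_lt (by norm_num) ht0).const_mul 4
  have habs : |∫ s in Ioi t, ff s| ≤ ∫ s in Ioi t, 4 * s ^ (-(7/4:ℝ)) := by
    calc |∫ s in Ioi t, ff s| ≤ ∫ s in Ioi t, |ff s| := abs_int_le _
      _ ≤ ∫ s in Ioi t, 4 * s ^ (-(7/4:ℝ)) := by
          apply setIntegral_mono_on (hint_t.abs) hmaj measurableSet_Ioi
          intro s hs
          exact ff_abs_le_far s (le_of_lt (lt_of_le_of_lt ht hs))
  have hval : ∫ s in Ioi t, (s : ℝ) ^ (-(7/4:ℝ)) = -t ^ (-(7/4:ℝ) + 1) / (-(7/4:ℝ) + 1) :=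
    integral_Ioi_rpow_of_lt (by norm_num) ht0
  rw [hL, abs_neg]
  refine habs.trans ?_
  rw [MeasureTheory.integral_const_mul, hval]
  have : -t ^ (-(7/4:ℝ) + 1) / (-(7/4:ℝ) + 1) = (4/3) * t ^ (-(3/4:ℝ)) := by
    norm_num; ring
  rw [this]
  have hpos : 0 ≤ t ^ (-(3/4:ℝ)) := le_of_lt (rpow_pos_of_pos ht0 _)
  nlinarith

noncomputable def gg (t : ℝ) : ℝ :=
  t * (1 + t ^ 2) ^ (-(5 / 4 : ℝ)) * Real.exp (Lfun t / Real.pi)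

noncomputable def DD (t : ℝ) : ℝ := gg t - t ^ (-(3/2 : ℝ))

lemma exp_abs_bound (a : ℝ) : |Real.exp a - 1| ≤ |a| * Real.exp |a| := by
  rcases le_or_gt 0 a with h | h
  · rw [abs_of_nonneg h, abs_of_nonneg (by linarith [Real.one_le_exp h] : (0:ℝ) ≤ Real.exp a - 1)]
    have h1 : 1 - a ≤ Real.exp (-a) := by linarith [Real.add_one_le_exp (-a)]
    have h3 : 0 < Real.exp a := Real.exp_pos a
    have h4 : Real.exp a * (1 - a) ≤ Real.exp a * Real.exp (-a) :=
      mul_le_mul_of_nonneg_left h1 h3.le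
    rw [← Real.exp_add, add_neg_cancel, Real.exp_zero] at h4
    nlinarith
  · rw [abs_of_neg h]
    have h1 : Real.exp a < 1 := Real.exp_lt_one_iff.mpr h
    rw [abs_of_nonpos (by linarith : Real.exp a - 1 ≤ 0)]
    have h2 : a + 1 ≤ Real.exp a := Real.add_one_le_exp a
    have h3 : 1 ≤ Real.exp (-a) := Real.one_le_exp (by linarith)
    nlinarith

lemma gg_contOn : ContinuousOn gg (Ioi 0) := by
  apply ContinuousOn.mul
  · apply ContinuousOn.mul continuousOn_id
    apply ContinuousOn.rpow_const
    · fun_prop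
    · intro t _; left; positivity
  · exact (Lfun_contOn.div_const _).rexp

lemma gg_aesm : AEStronglyMeasurable gg (volume.restrict (Ioi 0)) :=
  gg_contOn.aestronglyMeasurable measurableSet_Ioi

lemma gg_nonneg (t : ℝ) (ht : 0 ≤ t) : 0 ≤ gg t := by
  unfold gg; positivity

lemma expL_le (t : ℝ) (ht : 0 ≤ t) : Real.exp (Lfun t / Real.pi) ≤ Real.exp (Bconst / Real.pi) := by
  apply Real.exp_le_exp.mpr
  gcongr
  exact le_trans (le_abs_self _) (abs_Lfun_le t ht)

lemma gg_le_near (t : ℝ) (ht0 : 0 ≤ t) : gg t ≤ Real.exp (Bconst / Real.pi) * t := by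
  unfold gg
  have h1 : (1 + t ^ 2) ^ (-(5/4:ℝ)) ≤ 1 :=
    Real.rpow_le_one_of_one_le_of_nonpos (by nlinarith) (by norm_num)
  have h2 := expL_le t ht0
  have he : 0 < Real.exp (Lfun t / Real.pi) := Real.exp_pos _
  calc t * (1 + t ^ 2) ^ (-(5/4:ℝ)) * Real.exp (Lfun t / Real.pi)
      ≤ t * 1 * Real.exp (Lfun t / Real.pi) := by
        apply mul_le_mul_of_nonneg_right ?_ he.le
        exact mul_le_mul_of_nonneg_left h1 ht0
    _ = t * Real.exp (Lfun t / Real.pi) := by ring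
    _ ≤ t * Real.exp (Bconst / Real.pi) := mul_le_mul_of_nonneg_left h2 ht0
    _ = Real.exp (Bconst / Real.pi) * t := mul_comm _ _

lemma t_rpow_eq (t : ℝ) (ht : 0 < t) :
    t * (1 + t ^ 2) ^ (-(5/4:ℝ)) = t ^ (-(3/2:ℝ)) * (1 + t⁻¹ ^ 2) ^ (-(5/4:ℝ)) := by
  have h1 : (1 : ℝ) + t ^ 2 = t ^ 2 * (1 + t⁻¹ ^ 2) := by
    field_simp; ring
  rw [h1, Real.mul_rpow (by positivity) (by positivity)]
  have h2 : (t ^ 2 : ℝ) ^ (-(5/4:ℝ)) = t ^ (-(5/2:ℝ)) := by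
    rw [← Real.rpow_natCast t 2, ← Real.rpow_mul ht.le]
    norm_num
  rw [h2]
  rw [show t * (t ^ (-(5/2:ℝ)) * (1 + t⁻¹ ^ 2) ^ (-(5/4:ℝ)))
      = (t * t ^ (-(5/2:ℝ))) * (1 + t⁻¹ ^ 2) ^ (-(5/4:ℝ)) by ring]
  congr 1
  rw [show (-(3/2:ℝ)) = 1 + (-(5/2:ℝ)) by norm_num, Real.rpow_add ht, Real.rpow_one]

lemma gg_le_far (t : ℝ) (ht : 1 ≤ t) : gg t ≤ Real.exp (Bconst / Real.pi) * t ^ (-(3/2:ℝ)) := by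
  have ht0 : (0:ℝ) < t := lt_of_lt_of_le one_pos ht
  unfold gg
  rw [t_rpow_eq t ht0]
  have h1 : (1 + t⁻¹ ^ 2) ^ (-(5/4:ℝ)) ≤ 1 :=
    Real.rpow_le_one_of_one_le_of_nonpos (by nlinarith [sq_nonneg t⁻¹]) (by norm_num)
  have h2 := expL_le t ht0.le
  have h3 : (0:ℝ) < t ^ (-(3/2:ℝ)) := rpow_pos_of_pos ht0 _
  have he : 0 < Real.exp (Lfun t / Real.pi) := Real.exp_pos _
  calc t ^ (-(3/2:ℝ)) * (1 + t⁻¹ ^ 2) ^ (-(5/4:ℝ)) * Real.exp (Lfun t / Real.pi)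
      ≤ t ^ (-(3/2:ℝ)) * 1 * Real.exp (Lfun t / Real.pi) := by
        apply mul_le_mul_of_nonneg_right ?_ he.le
        exact mul_le_mul_of_nonneg_left h1 h3.le
    _ = t ^ (-(3/2:ℝ)) * Real.exp (Lfun t / Real.pi) := by ring
    _ ≤ t ^ (-(3/2:ℝ)) * Real.exp (Bconst / Real.pi) := mul_le_mul_of_nonneg_left h2 h3.le
    _ = Real.exp (Bconst / Real.pi) * t ^ (-(3/2:ℝ)) := mul_comm _ _

lemma gg_int : IntegrableOn gg (Ioi 0) := by
  have hsplit : (Ioi (0:ℝ)) = Ioc 0 1 ∪ Ioi 1 := (Ioc_union_Ioi_eq_Ioi one_pos.le).symm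
  rw [hsplit]
  apply IntegrableOn.union
  · have hmaj : IntegrableOn (fun _ : ℝ => Real.exp (Bconst / Real.pi)) (Ioc 0 1) :=
      integrableOn_const measure_Ioc_lt_top.ne
    refine hmaj.mono' (gg_aesm.mono_set Ioc_subset_Ioi_self) ?_
    filter_upwards [ae_restrict_mem measurableSet_Ioc] with t htm
    rw [Real.norm_eq_abs, abs_of_nonneg (gg_nonneg t htm.1.le)]
    calc gg t ≤ Real.exp (Bconst / Real.pi) * t := gg_le_near t htm.1.le
      _ ≤ Real.exp (Bconst / Real.pi) * 1 :=
          mul_le_mul_of_nonneg_left htm.2 (Real.exp_pos _).le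
      _ = Real.exp (Bconst / Real.pi) := mul_one _
  · have hmaj : IntegrableOn (fun t : ℝ => Real.exp (Bconst / Real.pi) * t ^ (-(3/2:ℝ))) (Ioi 1) :=
      (integrableOn_Ioi_rpow_of_lt (by norm_num) one_pos).const_mul _
    refine hmaj.mono' (gg_aesm.mono_set (Ioi_subset_Ioi one_pos.le)) ?_
    filter_upwards [ae_restrict_mem measurableSet_Ioi] with t htm
    rw [Real.norm_eq_abs, abs_of_nonneg (gg_nonneg t (by linarith [htm.out]))]
    exact gg_le_far t htm.out.le

-- far bound on DD
set_option maxHeartbeats 1000000 in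
lemma DD_far (t : ℝ) (ht : 1 ≤ t) : |DD t| ≤ (2 * Real.exp 2 + 3) * t ^ (-(9/4:ℝ)) := by
  have ht0 : (0:ℝ) < t := lt_of_lt_of_le one_pos ht
  have h32 : (0:ℝ) < t ^ (-(3/2:ℝ)) := rpow_pos_of_pos ht0 _
  have h34 : (0:ℝ) < t ^ (-(3/4:ℝ)) := rpow_pos_of_pos ht0 _
  set v : ℝ := (1 + t⁻¹ ^ 2) ^ (-(5/4:ℝ)) with hv
  set E : ℝ := Real.exp (Lfun t / Real.pi) with hE
  have hDD : DD t = t ^ (-(3/2:ℝ)) * (v * E - 1) := by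
    rw [DD, gg, t_rpow_eq t ht0]; ring
  -- bound |v*E - 1|
  have hw : (1:ℝ) ≤ 1 + t⁻¹ ^ 2 := by nlinarith [sq_nonneg t⁻¹]
  have hv1 : v ≤ 1 := Real.rpow_le_one_of_one_le_of_nonpos hw (by norm_num)
  have hv0 : 0 < v := by rw [hv]; positivity
  -- |L/π| ≤ 2 t^{-3/4} ≤ 2
  have hpi : (1:ℝ) ≤ Real.pi := by linarith [Real.pi_gt_three]
  have hLp : |Lfun t / Real.pi| ≤ 2 * t ^ (-(3/4:ℝ)) := by
    rw [abs_div, abs_of_pos Real.pi_pos]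
    have h6 := Lfun_tail t ht
    calc |Lfun t| / Real.pi ≤ |Lfun t| / 3 := by
          apply div_le_div_of_nonneg_left (abs_nonneg _) (by norm_num) (by linarith [Real.pi_gt_three])
      _ ≤ (6 * t ^ (-(3/4:ℝ))) / 3 := by linarith [div_le_div_of_nonneg_right (c := (3:ℝ)) h6 (by norm_num)]
      _ = 2 * t ^ (-(3/4:ℝ)) := by ring
  have ht34 : t ^ (-(3/4:ℝ)) ≤ 1 :=
    Real.rpow_le_one_of_one_le_of_nonpos ht (by norm_num)
  have hLp2 : |Lfun t / Real.pi| ≤ 2 := by nlinarith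
  have hexp : |E - 1| ≤ 2 * Real.exp 2 * t ^ (-(3/4:ℝ)) := by
    have := exp_abs_bound (Lfun t / Real.pi)
    have h8 : Real.exp |Lfun t / Real.pi| ≤ Real.exp 2 := Real.exp_le_exp.mpr hLp2
    calc |E - 1| ≤ |Lfun t / Real.pi| * Real.exp |Lfun t / Real.pi| := this
      _ ≤ (2 * t ^ (-(3/4:ℝ))) * Real.exp 2 := by
          apply mul_le_mul hLp h8 (le_of_lt (Real.exp_pos _)) (by positivity)
      _ = 2 * Real.exp 2 * t ^ (-(3/4:ℝ)) := by ring
  -- 1 - v ≤ 3 t^{-2} ≤ 3 t^{-3/4}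
  have hvlb : 1 - v ≤ 3 * t ^ (-(3/4:ℝ)) := by
    have hw2 : (1 + t⁻¹ ^ 2) ≤ 2 := by
      have : t⁻¹ ≤ 1 := by
        rw [inv_le_one_iff₀]; right; exact ht
      have h0 : 0 ≤ t⁻¹ := by positivity
      nlinarith
    have hmono : (1 + t⁻¹ ^ 2) ^ (-(2:ℝ)) ≤ v :=
      Real.rpow_le_rpow_of_exponent_le hw (by norm_num)
    have hw0 : (0:ℝ) < 1 + t⁻¹ ^ 2 := by linarith
    have hinv : (1 + t⁻¹ ^ 2) ^ (-(2:ℝ)) = ((1 + t⁻¹ ^ 2) ^ 2)⁻¹ := by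
      rw [Real.rpow_neg hw0.le, Real.rpow_two]
    set w : ℝ := 1 + t⁻¹ ^ 2
    have h9 : 1 - v ≤ 1 - (w ^ 2)⁻¹ := by rw [← hinv]; linarith
    have h10 : 1 - (w ^ 2)⁻¹ ≤ w ^ 2 - 1 := by
      have hw1 : (1:ℝ) ≤ w ^ 2 := by nlinarith
      have hwp : (0:ℝ) < w ^ 2 := by nlinarith
      have : (w^2 - 1) / w^2 ≤ w^2 - 1 := by
        apply div_le_self (by linarith) (by nlinarith)
      calc 1 - (w ^ 2)⁻¹ = (w^2 - 1)/w^2 := by field_simp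
        _ ≤ w^2 - 1 := this
    have h11 : w ^ 2 - 1 = (w - 1) * (w + 1) := by ring
    have h12 : w - 1 = t⁻¹ ^ 2 := by simp [w]
    have h13 : t⁻¹ ^ 2 ≤ t ^ (-(3/4:ℝ)) := by
      have heq : t ^ (-(2:ℝ)) = t⁻¹ ^ 2 := by
        rw [Real.rpow_neg ht0.le, Real.rpow_two, inv_pow]
      rw [← heq]
      exact Real.rpow_le_rpow_of_exponent_le ht (by norm_num)
    have h14 : w + 1 ≤ 3 := by linarith
    have h15 : w ^ 2 - 1 ≤ 3 * t⁻¹ ^ 2 := by nlinarith [sq_nonneg t⁻¹]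
    linarith
  have hcomb : |v * E - 1| ≤ (2 * Real.exp 2 + 3) * t ^ (-(3/4:ℝ)) := by
    have : v * E - 1 = v * (E - 1) + (v - 1) := by ring
    rw [this]
    calc |v * (E - 1) + (v - 1)| ≤ |v * (E - 1)| + |v - 1| := abs_add_le _ _
      _ ≤ 1 * |E - 1| + (1 - v) := by
          rw [abs_mul, abs_of_pos hv0, abs_of_nonpos (by linarith : v - 1 ≤ 0)]
          have := abs_nonneg (E - 1)
          nlinarith
      _ ≤ (2 * Real.exp 2 * t ^ (-(3/4:ℝ))) + 3 * t ^ (-(3/4:ℝ)) := by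
          rw [one_mul]; exact add_le_add hexp hvlb
      _ = (2 * Real.exp 2 + 3) * t ^ (-(3/4:ℝ)) := by ring
  rw [hDD, abs_mul, abs_of_pos h32]
  calc t ^ (-(3/2:ℝ)) * |v * E - 1| ≤ t ^ (-(3/2:ℝ)) * ((2 * Real.exp 2 + 3) * t ^ (-(3/4:ℝ))) := by
        apply mul_le_mul_of_nonneg_left hcomb h32.le
    _ = (2 * Real.exp 2 + 3) * (t ^ (-(3/2:ℝ)) * t ^ (-(3/4:ℝ))) := by ring
    _ = (2 * Real.exp 2 + 3) * t ^ (-(9/4:ℝ)) := by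
        rw [← Real.rpow_add ht0]; norm_num

-- integrand for the model integral
noncomputable def mo (u : ℝ) : ℝ := u ^ (-(3/2:ℝ)) * (1 - Real.exp (-u))

lemma one_sub_exp_neg_le (u : ℝ) (hu : 0 ≤ u) : 1 - Real.exp (-u) ≤ u := by
  linarith [Real.add_one_le_exp (-u)]

lemma one_sub_exp_neg_nonneg (u : ℝ) (hu : 0 ≤ u) : 0 ≤ 1 - Real.exp (-u) := by
  have : Real.exp (-u) ≤ 1 := Real.exp_le_one_iff.mpr (by linarith)
  linarith

lemma mo_cont : ContinuousOn mo (Ioi 0) := by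
  apply ContinuousOn.mul
  · apply ContinuousOn.rpow_const continuousOn_id
    intro t ht; left; exact ne_of_gt ht
  · fun_prop

lemma mo_int : IntegrableOn mo (Ioi 0) := by
  have hsplit : (Ioi (0:ℝ)) = Ioc 0 1 ∪ Ioi 1 := (Ioc_union_Ioi_eq_Ioi one_pos.le).symm
  rw [hsplit]
  apply IntegrableOn.union
  · have hmaj : IntegrableOn (fun u : ℝ => u ^ (-(1/2:ℝ))) (Ioc 0 1) := by
      have := intervalIntegral.intervalIntegrable_rpow' (a := (0:ℝ)) (b := 1)
        (by norm_num : (-1:ℝ) < -(1/2))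
      rwa [intervalIntegrable_iff_integrableOn_Ioc_of_le one_pos.le] at this
    refine hmaj.mono' ((mo_cont.mono Ioc_subset_Ioi_self).aestronglyMeasurable measurableSet_Ioc) ?_
    filter_upwards [ae_restrict_mem measurableSet_Ioc] with u hum
    have hu0 : (0:ℝ) < u := hum.1
    rw [Real.norm_eq_abs, mo, abs_mul,
      abs_of_pos (rpow_pos_of_pos hu0 _), abs_of_nonneg (one_sub_exp_neg_nonneg u hu0.le)]
    calc u ^ (-(3/2:ℝ)) * (1 - Real.exp (-u)) ≤ u ^ (-(3/2:ℝ)) * u := by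
          apply mul_le_mul_of_nonneg_left (one_sub_exp_neg_le u hu0.le)
            (le_of_lt (rpow_pos_of_pos hu0 _))
      _ = u ^ (-(1/2:ℝ)) := by
          rw [show (-(1/2:ℝ)) = -(3/2) + 1 by norm_num, Real.rpow_add hu0, Real.rpow_one]
  · have hmaj : IntegrableOn (fun u : ℝ => u ^ (-(3/2:ℝ))) (Ioi 1) :=
      integrableOn_Ioi_rpow_of_lt (by norm_num) one_pos
    refine hmaj.mono' ((mo_cont.mono (Ioi_subset_Ioi one_pos.le)).aestronglyMeasurable
      measurableSet_Ioi) ?_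
    filter_upwards [ae_restrict_mem measurableSet_Ioi] with u hum
    have hu0 : (0:ℝ) < u := lt_trans one_pos hum.out
    rw [Real.norm_eq_abs, mo, abs_mul,
      abs_of_pos (rpow_pos_of_pos hu0 _), abs_of_nonneg (one_sub_exp_neg_nonneg u hu0.le)]
    have h1 : 1 - Real.exp (-u) ≤ 1 := by linarith [Real.exp_pos (-u)]
    nlinarith [rpow_pos_of_pos hu0 (-(3/2:ℝ))]

lemma gamma_half : ∫ u in Ioi (0:ℝ), Real.exp (-u) * u ^ (-(1/2:ℝ)) = Real.sqrt Real.pi := by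
  have := Real.Gamma_eq_integral (s := 1/2) (by norm_num)
  rw [Real.Gamma_one_half_eq] at this
  have h2 : (∫ u in Ioi (0:ℝ), Real.exp (-u) * u ^ (-(1/2:ℝ)))
      = ∫ x in Ioi (0:ℝ), Real.exp (-x) * x ^ ((1/2:ℝ) - 1) := by
    apply setIntegral_congr_fun measurableSet_Ioi
    intro u hu
    norm_num
  exact h2.trans this.symm

lemma gamma_half_int : IntegrableOn (fun u : ℝ => Real.exp (-u) * u ^ (-(1/2:ℝ))) (Ioi 0) := by
  have := Real.GammaIntegral_convergent (s := 1/2) (by norm_num)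
  apply this.congr_fun ?_ measurableSet_Ioi
  intro u hu
  norm_num

-- IBP
lemma mo_integral : ∫ u in Ioi (0:ℝ), mo u = 2 * Real.sqrt Real.pi := by
  set F : ℝ → ℝ := fun u => -2 * u ^ (-(1/2:ℝ)) * (1 - Real.exp (-u)) with hF
  set F' : ℝ → ℝ := fun u => mo u - 2 * (Real.exp (-u) * u ^ (-(1/2:ℝ))) with hF'
  have hF0 : F 0 = 0 := by
    rw [hF]
    simp [Real.zero_rpow (by norm_num : (-(1/2:ℝ)) ≠ 0)]
  have hderiv : ∀ u ∈ Ioi (0:ℝ), HasDerivAt F (F' u) u := by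
    intro u hu
    have hu0 : (0:ℝ) < u := hu
    have h1 : HasDerivAt (fun v : ℝ => v ^ (-(1/2:ℝ)))
        (-(1/2:ℝ) * u ^ (-(1/2:ℝ) - 1)) u :=
      Real.hasDerivAt_rpow_const (Or.inl (ne_of_gt hu0))
    have h2 : HasDerivAt (fun v : ℝ => 1 - Real.exp (-v)) (Real.exp (-u)) u := by
      have : HasDerivAt (fun v : ℝ => Real.exp (-v)) (-Real.exp (-u)) u := by
        simpa [Function.comp_def] using (Real.hasDerivAt_exp (-u)).comp u (hasDerivAt_neg u)
      simpa using (this.const_sub 1)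
    have h3 := ((h1.const_mul (-2:ℝ)).mul h2)
    refine h3.congr_deriv ?_
    simp only [hF', mo]
    rw [show (-(1/2:ℝ) - 1) = -(3/2:ℝ) by norm_num]
    ring
  have hbnd : ∀ u : ℝ, 0 < u → ‖F u‖ = 2 * u ^ (-(1/2:ℝ)) * (1 - Real.exp (-u)) := by
    intro u h
    rw [Real.norm_eq_abs, hF]
    simp only
    rw [abs_mul, abs_mul, abs_of_pos (rpow_pos_of_pos h _),
      abs_of_nonneg (one_sub_exp_neg_nonneg u h.le),
      abs_of_nonpos (by norm_num : (-2:ℝ) ≤ 0)]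
    norm_num
  have hcont : ContinuousWithinAt F (Ici 0) 0 := by
    rw [ContinuousWithinAt, hF0]
    apply squeeze_zero_norm' (a := fun u : ℝ => 2 * u ^ ((1/2:ℝ)))
    · filter_upwards [self_mem_nhdsWithin] with u hu
      rcases eq_or_lt_of_le (mem_Ici.mp hu) with h | h
      · rw [← h, hF0]
        simp [Real.zero_rpow (by norm_num : ((1/2:ℝ)) ≠ 0)]
      · rw [hbnd u h]
        calc 2 * u ^ (-(1/2:ℝ)) * (1 - Real.exp (-u))
            ≤ 2 * u ^ (-(1/2:ℝ)) * u := by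
              apply mul_le_mul_of_nonneg_left (one_sub_exp_neg_le u h.le)
              positivity
          _ = 2 * u ^ ((1/2:ℝ)) := by
              rw [mul_assoc, ← Real.rpow_add_one (ne_of_gt h)]
              norm_num
    · have h0 : Tendsto (fun u : ℝ => 2 * u ^ ((1/2:ℝ))) (nhds 0) (nhds (2 * (0:ℝ) ^ ((1/2:ℝ)))) :=
        ((Real.continuous_rpow_const (by norm_num)).tendsto 0).const_mul 2
      rw [Real.zero_rpow (by norm_num : ((1/2:ℝ)) ≠ 0), mul_zero] at h0
      exact h0.mono_left nhdsWithin_le_nhds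
  have htop : Tendsto F atTop (nhds 0) := by
    apply squeeze_zero_norm' (a := fun u : ℝ => 2 * u ^ (-(1/2:ℝ)))
    · filter_upwards [eventually_gt_atTop (0:ℝ)] with u hu
      rw [hbnd u hu]
      have h1 : 1 - Real.exp (-u) ≤ 1 := by linarith [Real.exp_pos (-u)]
      nlinarith [rpow_pos_of_pos hu (-(1/2:ℝ))]
    · have h := tendsto_rpow_neg_atTop (y := (1/2:ℝ)) (by norm_num)
      have h2 : Tendsto (fun u : ℝ => 2 * u ^ (-(1/2:ℝ))) atTop (nhds (2 * 0)) := h.const_mul 2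
      simpa using h2
  have hF'int : IntegrableOn F' (Ioi 0) := mo_int.sub (gamma_half_int.const_mul 2)
  have key := integral_Ioi_of_hasDerivAt_of_tendsto hcont hderiv hF'int htop
  rw [hF0, sub_zero] at key
  have hsub : ∫ u in Ioi (0:ℝ), F' u
      = (∫ u in Ioi (0:ℝ), mo u) - ∫ u in Ioi (0:ℝ), 2 * (Real.exp (-u) * u ^ (-(1/2:ℝ))) :=
    integral_sub mo_int (gamma_half_int.const_mul 2)
  rw [key] at hsub
  rw [MeasureTheory.integral_const_mul, gamma_half] at hsub
  linarith

lemma model_scaled (x : ℝ) (hx : 0 < x) :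
    ∫ t in Ioi (0:ℝ), t ^ (-(3/2:ℝ)) * (1 - Real.exp (-t * x))
      = 2 * Real.sqrt Real.pi * x ^ ((1/2:ℝ)) := by
  have h := integral_comp_mul_right_Ioi mo 0 hx
  rw [zero_mul, mo_integral, smul_eq_mul] at h
  have heq : ∀ t ∈ Ioi (0:ℝ),
      mo (t * x) = x ^ (-(3/2:ℝ)) * (t ^ (-(3/2:ℝ)) * (1 - Real.exp (-t * x))) := by
    intro t ht
    have ht0 : (0:ℝ) < t := ht
    rw [mo, Real.mul_rpow ht0.le hx.le]
    rw [neg_mul]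
    ring
  rw [setIntegral_congr_fun measurableSet_Ioi heq, MeasureTheory.integral_const_mul] at h
  have hxne : x ^ (-(3/2:ℝ)) ≠ 0 := ne_of_gt (rpow_pos_of_pos hx _)
  have h32 : x ^ ((3/2:ℝ)) * x ^ (-(3/2:ℝ)) = 1 := by
    rw [← Real.rpow_add hx]; norm_num
  have key : (∫ t in Ioi (0:ℝ), t ^ (-(3/2:ℝ)) * (1 - Real.exp (-t * x)))
      = x ^ ((3/2:ℝ)) * (x⁻¹ * (2 * Real.sqrt Real.pi)) := by
    have := congrArg (fun z => x ^ ((3/2:ℝ)) * z) h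
    rw [← mul_assoc, h32, one_mul] at this
    exact this
  rw [key]
  have hxi : x⁻¹ = x ^ (-(1:ℝ)) := by
    rw [Real.rpow_neg hx.le, Real.rpow_one]
  rw [hxi, ← mul_assoc, ← Real.rpow_add hx]
  norm_num
  ring

lemma DD_aesm : AEStronglyMeasurable DD (volume.restrict (Ioi 0)) := by
  apply gg_aesm.sub
  apply ContinuousOn.aestronglyMeasurable ?_ measurableSet_Ioi
  apply ContinuousOn.rpow_const continuousOn_id
  intro t ht; left; exact ne_of_gt ht

lemma tDD_aesm : AEStronglyMeasurable (fun t => t * |DD t|) (volume.restrict (Ioi 0)) :=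
  (aestronglyMeasurable_id.restrict).mul (by simpa [Real.norm_eq_abs] using DD_aesm.norm)

lemma tDD_int : IntegrableOn (fun t => t * |DD t|) (Ioi 0) := by
  have hsplit : (Ioi (0:ℝ)) = Ioc 0 1 ∪ Ioi 1 := (Ioc_union_Ioi_eq_Ioi one_pos.le).symm
  rw [hsplit]
  apply IntegrableOn.union
  · have hmaj : IntegrableOn (fun t : ℝ => Real.exp (Bconst / Real.pi) + t ^ (-(1/2:ℝ)))
        (Ioc 0 1) := by
      apply Integrable.add (integrableOn_const measure_Ioc_lt_top.ne)
      have := intervalIntegral.intervalIntegrable_rpow' (a := (0:ℝ)) (b := 1)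
        (by norm_num : (-1:ℝ) < -(1/2))
      rwa [intervalIntegrable_iff_integrableOn_Ioc_of_le one_pos.le] at this
    refine hmaj.mono' (tDD_aesm.mono_set Ioc_subset_Ioi_self) ?_
    filter_upwards [ae_restrict_mem measurableSet_Ioc] with t htm
    have ht0 : (0:ℝ) < t := htm.1
    have ht1 : t ≤ 1 := htm.2
    rw [Real.norm_eq_abs, abs_of_nonneg (by positivity : (0:ℝ) ≤ t * |DD t|)]
    have h1 : |DD t| ≤ gg t + t ^ (-(3/2:ℝ)) := by
      rw [DD]
      calc |gg t - t ^ (-(3/2:ℝ))| ≤ |gg t| + |t ^ (-(3/2:ℝ))| := abs_sub _ _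
        _ = gg t + t ^ (-(3/2:ℝ)) := by
            rw [abs_of_nonneg (gg_nonneg t ht0.le), abs_of_pos (rpow_pos_of_pos ht0 _)]
    calc t * |DD t| ≤ t * (gg t + t ^ (-(3/2:ℝ))) := mul_le_mul_of_nonneg_left h1 ht0.le
      _ = t * gg t + t * t ^ (-(3/2:ℝ)) := by ring
      _ ≤ Real.exp (Bconst / Real.pi) + t ^ (-(1/2:ℝ)) := by
          apply add_le_add
          · calc t * gg t ≤ 1 * gg t := by
                  apply mul_le_mul_of_nonneg_right ht1 (gg_nonneg t ht0.le)
              _ = gg t := one_mul _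
              _ ≤ Real.exp (Bconst / Real.pi) * t := gg_le_near t ht0.le
              _ ≤ Real.exp (Bconst / Real.pi) * 1 :=
                  mul_le_mul_of_nonneg_left ht1 (Real.exp_pos _).le
              _ = Real.exp (Bconst / Real.pi) := mul_one _
          · rw [mul_comm, ← Real.rpow_add_one (ne_of_gt ht0)]
            norm_num
  · have hmaj : IntegrableOn (fun t : ℝ => (2 * Real.exp 2 + 3) * t ^ (-(5/4:ℝ))) (Ioi 1) :=
      (integrableOn_Ioi_rpow_of_lt (by norm_num) one_pos).const_mul _
    refine hmaj.mono' (tDD_aesm.mono_set (Ioi_subset_Ioi one_pos.le)) ?_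
    filter_upwards [ae_restrict_mem measurableSet_Ioi] with t htm
    have ht1 : (1:ℝ) ≤ t := htm.out.le
    have ht0 : (0:ℝ) < t := lt_of_lt_of_le one_pos ht1
    rw [Real.norm_eq_abs, abs_of_nonneg (by positivity : (0:ℝ) ≤ t * |DD t|)]
    calc t * |DD t| ≤ t * ((2 * Real.exp 2 + 3) * t ^ (-(9/4:ℝ))) :=
          mul_le_mul_of_nonneg_left (DD_far t ht1) ht0.le
      _ = (2 * Real.exp 2 + 3) * (t * t ^ (-(9/4:ℝ))) := by ring
      _ = (2 * Real.exp 2 + 3) * t ^ (-(5/4:ℝ)) := by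
          rw [mul_comm t, ← Real.rpow_add_one (ne_of_gt ht0)]
          norm_num

noncomputable def C1 : ℝ := ∫ t in Ioi (0:ℝ), t * |DD t|

lemma C1_nonneg : 0 ≤ C1 := setIntegral_nonneg measurableSet_Ioi fun t ht => mul_nonneg (le_of_lt ht) (abs_nonneg _)

lemma DD_term_int (x : ℝ) (hx : 0 ≤ x) :
    IntegrableOn (fun t => DD t * (1 - Real.exp (-t * x))) (Ioi 0) := by
  refine (tDD_int.const_mul x).mono'
    (DD_aesm.mul ((Continuous.aestronglyMeasurable (by fun_prop)).restrict)) ?_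
  filter_upwards [ae_restrict_mem measurableSet_Ioi] with t htm
  have ht0 : (0:ℝ) < t := htm
  rw [Real.norm_eq_abs, abs_mul]
  have h0 : 0 ≤ 1 - Real.exp (-(t * x)) := one_sub_exp_neg_nonneg _ (by positivity)
  have h1 : 1 - Real.exp (-(t * x)) ≤ t * x := one_sub_exp_neg_le _ (by positivity)
  rw [neg_mul, abs_of_nonneg h0]
  calc |DD t| * (1 - Real.exp (-(t * x))) ≤ |DD t| * (t * x) :=
        mul_le_mul_of_nonneg_left h1 (abs_nonneg _)
    _ = x * (t * |DD t|) := by ring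

lemma DD_term_bound (x : ℝ) (hx : 0 ≤ x) :
    |∫ t in Ioi (0:ℝ), DD t * (1 - Real.exp (-t * x))| ≤ C1 * x := by
  refine (abs_int_le _).trans ?_
  have hmono : ∫ t in Ioi (0:ℝ), |DD t * (1 - Real.exp (-t * x))|
      ≤ ∫ t in Ioi (0:ℝ), x * (t * |DD t|) := by
    apply setIntegral_mono_on (DD_term_int x hx).abs (tDD_int.const_mul x) measurableSet_Ioi
    intro t ht
    have ht0 : (0:ℝ) < t := ht
    rw [abs_mul]
    have h0 : 0 ≤ 1 - Real.exp (-(t * x)) := one_sub_exp_neg_nonneg _ (by positivity)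
    have h1 : 1 - Real.exp (-(t * x)) ≤ t * x := one_sub_exp_neg_le _ (by positivity)
    rw [neg_mul, abs_of_nonneg h0]
    calc |DD t| * (1 - Real.exp (-(t * x))) ≤ |DD t| * (t * x) :=
          mul_le_mul_of_nonneg_left h1 (abs_nonneg _)
      _ = x * (t * |DD t|) := by ring
  refine hmono.trans ?_
  rw [MeasureTheory.integral_const_mul]
  rw [mul_comm]
  exact le_of_eq rfl

lemma sin_diff (a b : ℝ) : |Real.sin a - Real.sin b| ≤ |a - b| := by
  rw [Real.sin_sub_sin, abs_mul, abs_mul]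
  calc |2| * |Real.sin ((a-b)/2)| * |Real.cos ((a+b)/2)|
      ≤ |2| * |(a-b)/2| * 1 := by
        apply mul_le_mul ?_ (Real.abs_cos_le_one _) (abs_nonneg _) (by positivity)
        exact mul_le_mul_of_nonneg_left (Real.abs_sin_le_abs) (abs_nonneg 2)
    _ = |a - b| := by
        rw [mul_one, abs_div, abs_two]
        ring

lemma gg_exp_int (x : ℝ) (hx : 0 ≤ x) :
    IntegrableOn (fun t => gg t * Real.exp (-t * x)) (Ioi 0) := by
  refine gg_int.mono' (gg_aesm.mul ((Continuous.aestronglyMeasurable (by fun_prop)).restrict)) ?_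
  filter_upwards [ae_restrict_mem measurableSet_Ioi] with t htm
  have ht0 : (0:ℝ) < t := htm
  rw [Real.norm_eq_abs, abs_mul, abs_of_nonneg (gg_nonneg t ht0.le),
    abs_of_pos (Real.exp_pos _)]
  have h1 : Real.exp (-t * x) ≤ 1 := by
    apply Real.exp_le_one_iff.mpr
    rw [neg_mul]
    have : 0 ≤ t * x := by positivity
    linarith
  calc gg t * Real.exp (-t * x) ≤ gg t * 1 :=
        mul_le_mul_of_nonneg_left h1 (gg_nonneg t ht0.le)
    _ = gg t := mul_one _

lemma gg_one_sub_int (x : ℝ) (hx : 0 ≤ x) :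
    IntegrableOn (fun t => gg t * (1 - Real.exp (-t * x))) (Ioi 0) := by
  have heq : ∀ t : ℝ, gg t * (1 - Real.exp (-t * x)) = gg t - gg t * Real.exp (-t * x) := by
    intro t; ring
  simp_rw [heq]
  exact gg_int.sub (gg_exp_int x hx)

lemma rFun_eq (x : ℝ) : rFun x
    = (Real.sqrt 2 / (2 * Real.pi)) * ∫ t in Ioi (0:ℝ), gg t * Real.exp (-t * x) := rfl

lemma rFun_zero_eq : rFun 0 = (Real.sqrt 2 / (2 * Real.pi)) * ∫ t in Ioi (0:ℝ), gg t := by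
  rw [rFun_eq]
  congr 1
  apply setIntegral_congr_fun measurableSet_Ioi
  intro t ht
  simp

lemma rFun_sub (x : ℝ) (hx : 0 < x) :
    rFun 0 - rFun x = (Real.sqrt 2 / (2 * Real.pi)) *
      ((∫ t in Ioi (0:ℝ), DD t * (1 - Real.exp (-t * x)))
        + 2 * Real.sqrt Real.pi * x ^ ((1/2:ℝ))) := by
  rw [rFun_zero_eq, rFun_eq, ← mul_sub]
  congr 1
  rw [← integral_sub gg_int (gg_exp_int x hx.le)]
  have h1 : (∫ t in Ioi (0:ℝ), (gg t - gg t * Real.exp (-t * x)))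
      = ∫ t in Ioi (0:ℝ), gg t * (1 - Real.exp (-t * x)) := by
    apply setIntegral_congr_fun measurableSet_Ioi
    intro t ht; ring
  rw [h1]
  have h2 : (∫ t in Ioi (0:ℝ), gg t * (1 - Real.exp (-t * x)))
      - (∫ t in Ioi (0:ℝ), DD t * (1 - Real.exp (-t * x)))
      = ∫ t in Ioi (0:ℝ), t ^ (-(3/2:ℝ)) * (1 - Real.exp (-t * x)) := by
    rw [← integral_sub (gg_one_sub_int x hx.le) (DD_term_int x hx.le)]
    apply setIntegral_congr_fun measurableSet_Ioi
    intro t ht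
    simp only [DD]
    ring
  rw [model_scaled x hx] at h2
  linarith

lemma const_eq : (Real.sqrt 2 / (2 * Real.pi)) * (2 * Real.sqrt Real.pi)
    = Real.sqrt (2 / Real.pi) := by
  have hpi : (0:ℝ) < Real.pi := Real.pi_pos
  have hs : Real.sqrt Real.pi * Real.sqrt Real.pi = Real.pi :=
    Real.mul_self_sqrt hpi.le
  have hdiv : Real.sqrt (2 / Real.pi) = Real.sqrt 2 / Real.sqrt Real.pi :=
    Real.sqrt_div (by norm_num) _
  rw [hdiv]
  have hsp : Real.sqrt Real.pi ≠ 0 := by positivity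
  field_simp
  nlinarith [Real.sqrt_nonneg 2]

/-- Assuming `r(0) = sin(π/8)`, there is `c > 0` such that
`|ψ(x) - √(2/π) x^{1/2}| ≤ c x` for all `x > 0`. -/
theorem stmt18 (hr0 : rFun 0 = Real.sin (Real.pi / 8)) :
    ∃ c : ℝ, 0 < c ∧ ∀ x : ℝ, 0 < x →
      |psiFun x - Real.sqrt (2 / Real.pi) * x ^ ((1 / 2 : ℝ))| ≤ c * x := by
  have hc0 : (0:ℝ) < Real.sqrt 2 / (2 * Real.pi) := by positivity
  have hC1 := C1_nonneg
  refine ⟨1 + (Real.sqrt 2 / (2 * Real.pi)) * C1, ?_, ?_⟩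
  · have := mul_nonneg hc0.le hC1
    linarith
  intro x hx
  set c₀ := Real.sqrt 2 / (2 * Real.pi) with hc₀
  set I := ∫ t in Ioi (0:ℝ), DD t * (1 - Real.exp (-t * x)) with hI
  have hsub := rFun_sub x hx
  have hconst : c₀ * (2 * Real.sqrt Real.pi * x ^ ((1/2:ℝ)))
      = Real.sqrt (2 / Real.pi) * x ^ ((1/2:ℝ)) := by
    rw [← mul_assoc, const_eq]
  have h2 : rFun 0 - rFun x = c₀ * I + Real.sqrt (2 / Real.pi) * x ^ ((1/2:ℝ)) := by
    rw [hsub, mul_add, hconst]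
  have hkey : psiFun x - Real.sqrt (2 / Real.pi) * x ^ ((1/2:ℝ))
      = (Real.sin (x + Real.pi / 8) - Real.sin (Real.pi / 8)) + c₀ * I := by
    rw [psiFun, ← hr0]
    linarith
  rw [show ((1/2:ℝ)) = ((1/2:ℝ)) from rfl] at hkey
  rw [hkey]
  have hb1 : |Real.sin (x + Real.pi / 8) - Real.sin (Real.pi / 8)| ≤ x := by
    have := sin_diff (x + Real.pi / 8) (Real.pi / 8)
    rw [add_sub_cancel_right, abs_of_pos hx] at this
    exact this
  have hb2 : |c₀ * I| ≤ c₀ * (C1 * x) := by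
    rw [abs_mul, abs_of_pos hc0]
    exact mul_le_mul_of_nonneg_left (DD_term_bound x hx.le) hc0.le
  calc |(Real.sin (x + Real.pi / 8) - Real.sin (Real.pi / 8)) + c₀ * I|
      ≤ |Real.sin (x + Real.pi / 8) - Real.sin (Real.pi / 8)| + |c₀ * I| := abs_add_le _ _
    _ ≤ x + c₀ * (C1 * x) := add_le_add hb1 hb2
    _ = (1 + c₀ * C1) * x := by ring
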